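/- arXiv:2402.08281 — 6 statements merged into one kernel-verified Lean document; each statement's English description precedes it below -/
import Mathlib

section
/- Let D be a triangulated category. Suppose given triangulated categories D_0, D_1, ..., D_r with D_0 = 0 (the zero category) and D_r = D; triangulated functors F_i : D_i → D_{i+1} for 0 ≤ i ≤ r−1; and, for each 1 ≤ i ≤ r, a set A_i and a family (X^i_a : a ∈ A_i) of objects of D_i whose images under the quotient functor generate, as a triangulated category, the Verdier quotient D_i/⟨F_{i−1}⟩, where ⟨F_{i−1}⟩ denotes the thick triangulated subcategory of D_i generated by the essential image of F_{i−1}. Then the family of objects F_{r−1} ∘ ⋯ ∘ F_i(X^i_a), for 1 ≤ i ≤ r and a ∈ A_i (for i = r this composition is interpreted as the identity, giving the objects X^r_a themselves), generates D as a triangulated category. -/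
/-!
STATEMENT 0: generation of a triangulated category from a filtration by triangulated
functors and generators of the successive Verdier quotients.

A thick triangulated subcategory is encoded as a `CategoryTheory.Triangulated.Subcategory`
which is moreover stable under retracts (= direct summands); note that stability under
retracts implies closure under isomorphisms, i.e. strict fullness.  A family of objects
generates a triangulated category if every thick triangulated subcategory containing the
family contains every object.  The Verdier quotient `D_i/⟨F_{i-1}⟩` of `D_i` by the thick
triangulated subcategory generated by the essential image of `F_{i-1}` is encoded as an
arbitrary localization functor `L` with respect to the class of morphisms whose cone lies
in that subcategory, together with the Verdier pretriangulated structure (distinguished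
triangles = triangles isomorphic to images of distinguished triangles).  The compositions
`F_{r-1} ∘ ⋯ ∘ F_i` are encoded by functors `G i : D_i ⥤ D_r` with `G r ≅ 𝟭` and
`G i ≅ F i ⋙ G (i+1)` for `i < r`.
-/

open CategoryTheory Limits Pretriangulated Triangulated ZeroObject

section Defs

variable {C : Type u} [Category.{v} C] [HasZeroObject C] [Preadditive C] [HasShift C ℤ]
  [∀ n : ℤ, (shiftFunctor C n).Additive] [Pretriangulated C]

namespace CategoryTheory.Triangulated

/-- The structure `Triangulated.Subcategory` of the older Mathlib (removed since),
restored with its old meaning. -/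
structure Subcategory (C : Type u) [Category.{v} C] [HasZeroObject C] [Preadditive C]
    [HasShift C ℤ] [∀ n : ℤ, (shiftFunctor C n).Additive] [Pretriangulated C] where
  P : C → Prop
  zero' : ∃ (Z : C) (_ : IsZero Z), P Z
  shift (X : C) (n : ℤ) : P X → P (X⟦n⟧)
  ext₂' (T : Triangle C) (_ : T ∈ distTriang C) : P T.obj₁ → P T.obj₃ →
    ∃ (Y : C) (_ : P Y), Nonempty (T.obj₂ ≅ Y)

namespace Subcategory

/-- The old constructor `Triangulated.Subcategory.mk'`. -/
def mk' (P : C → Prop) (zero : P 0)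
    (shift : ∀ (X : C) (n : ℤ), P X → P (X⟦n⟧))
    (ext₂ : ∀ (T : Triangle C) (_ : T ∈ distTriang C), P T.obj₁ → P T.obj₃ → P T.obj₂) :
    Subcategory C where
  P := P
  zero' := ⟨0, isZero_zero _, zero⟩
  shift := shift
  ext₂' T hT h₁ h₃ := ⟨T.obj₂, ext₂ T hT h₁ h₃, ⟨Iso.refl _⟩⟩

/-- The old class of morphisms `Triangulated.Subcategory.W`. -/
def W (S : Subcategory C) : MorphismProperty C := fun X Y f => ∃ (Z : C) (g : Y ⟶ Z)
  (h : Z ⟶ X⟦(1 : ℤ)⟧) (_ : Triangle.mk f g h ∈ distTriang C), S.P Z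

end Subcategory

end CategoryTheory.Triangulated

/-- A triangulated subcategory is thick if it is stable under direct summands,
i.e. under retracts. -/
def IsThickSubcategory (T : Triangulated.Subcategory C) : Prop :=
  ∀ ⦃X Y : C⦄ (i : X ⟶ Y) (r : Y ⟶ X), i ≫ r = 𝟙 X → T.P Y → T.P X

/-- A family of objects (given as a set) generates a triangulated category if the
only thick triangulated subcategory containing it consists of all objects. -/
def GeneratesTriangulated (A : Set C) : Prop :=
  ∀ T : Triangulated.Subcategory C, IsThickSubcategory T → (∀ Y ∈ A, T.P Y) → ∀ X : C, T.P X

/-- The thick triangulated subcategory generated by a set of objects. -/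
def thickClosure (A : Set C) : Triangulated.Subcategory C :=
  Triangulated.Subcategory.mk'
    (fun X => ∀ T : Triangulated.Subcategory C, IsThickSubcategory T → (∀ Y ∈ A, T.P Y) → T.P X)
    (fun T hT _ => by
      obtain ⟨Z, hZ, hZP⟩ := T.zero'
      exact hT (0 : (0 : C) ⟶ Z) 0 ((isZero_zero C).eq_of_src _ _) hZP)
    (fun X n hX T hT hA => T.shift X n (hX T hT hA))
    (fun Tr hTr h₁ h₃ T hT hA => by
      obtain ⟨Y, hY, ⟨e⟩⟩ := T.ext₂' Tr hTr (h₁ T hT hA) (h₃ T hT hA)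
      exact hT e.hom e.inv e.hom_inv_id hY)

end Defs
section ThickHelpers

universe u₁ v₁

variable {C : Type u₁} [Category.{v₁} C] [HasZeroObject C] [Preadditive C] [HasShift C ℤ]
  [∀ n : ℤ, (shiftFunctor C n).Additive] [Pretriangulated C]
  (T : Triangulated.Subcategory C)

lemma thick_iso (hT : IsThickSubcategory T) {X Y : C} (e : X ≅ Y) (h : T.P Y) : T.P X :=
  hT e.hom e.inv e.hom_inv_id h

lemma thick_ext₂ (hT : IsThickSubcategory T) (Tr : Triangle C) (hTr : Tr ∈ distTriang C)
    (h₁ : T.P Tr.obj₁) (h₃ : T.P Tr.obj₃) : T.P Tr.obj₂ := by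
  obtain ⟨Y, hY, ⟨e⟩⟩ := T.ext₂' Tr hTr h₁ h₃
  exact hT e.hom e.inv e.hom_inv_id hY

lemma thick_ext₁ (hT : IsThickSubcategory T) (Tr : Triangle C) (hTr : Tr ∈ distTriang C)
    (h₂ : T.P Tr.obj₂) (h₃ : T.P Tr.obj₃) : T.P Tr.obj₁ := by
  obtain ⟨Y, hY, ⟨e⟩⟩ := T.ext₂' _ (inv_rot_of_distTriang _ hTr) (T.shift _ (-1) h₃) h₂
  exact hT e.hom e.inv e.hom_inv_id hY

lemma thick_zero (hT : IsThickSubcategory T) {X : C} (hX : IsZero X) : T.P X := by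
  obtain ⟨Z, hZ, h⟩ := T.zero'
  exact thick_iso T hT (hX.iso hZ) h

lemma thick_unshift (hT : IsThickSubcategory T) {X : C} (n : ℤ) (h : T.P (X⟦n⟧)) : T.P X :=
  thick_iso T hT ((shiftEquiv C n).unitIso.app X) (T.shift _ (-n) h)

instance subcat_isTriangulated (S : Triangulated.Subcategory C) :
    ObjectProperty.IsTriangulated (C := C) S.P where
  exists_zero := by
    obtain ⟨Z, hZ, h⟩ := S.zero'
    exact ⟨Z, hZ, h⟩
  isStableUnderShiftBy a := ⟨fun X hX => S.shift X a hX⟩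
  ext₂' T hT h₁ h₃ := by
    obtain ⟨Y, hY, ⟨e⟩⟩ := S.ext₂' T hT h₁ h₃
    exact ⟨Y, hY, ⟨e⟩⟩

instance subcat_hasLeftCalculus [IsTriangulated C] (S : Triangulated.Subcategory C) :
    S.W.HasLeftCalculusOfFractions :=
  inferInstanceAs (ObjectProperty.trW (C := C) S.P).HasLeftCalculusOfFractions

lemma thickClosure_isThick (A : Set C) : IsThickSubcategory (thickClosure A) :=
  fun _ _ i r hir hY U hU hA => hU i r hir (hY U hU hA)

end ThickHelpers

section KeyLemmas

universe u₁ v₁ u₂ v₂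

variable {C : Type u₁} [Category.{v₁} C] [HasZeroObject C] [Preadditive C] [HasShift C ℤ]
  [∀ n : ℤ, (shiftFunctor C n).Additive] [Pretriangulated C] [IsTriangulated C]
  {D : Type u₂} [Category.{v₂} D] [HasZeroObject D] [Preadditive D] [HasShift D ℤ]
  [∀ n : ℤ, (shiftFunctor D n).Additive] [Pretriangulated D]
  (T S : Triangulated.Subcategory C) (L : C ⥤ D) [L.CommShift ℤ] [L.IsTriangulated]
  [L.IsLocalization S.W]

lemma key_iso (hT : IsThickSubcategory T) (hS : ∀ X, S.P X → T.P X)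
    {A B : C} (e : L.obj A ≅ L.obj B) (hB : T.P B) : T.P A := by
  obtain ⟨φ, hφ⟩ := Localization.exists_leftFraction L S.W e.hom
  obtain ⟨Z, g, h, hTri, hZ⟩ := φ.hs
  have hY' : T.P φ.Y' := thick_ext₂ T hT _ hTri hB (hS _ hZ)
  have hsiso : IsIso (L.map φ.s) := Localization.inverts L S.W _ φ.hs
  have hf : IsIso (L.map φ.f) := by
    rw [← MorphismProperty.LeftFraction.map_comp_map_s φ L (Localization.inverts L S.W), ← hφ]
    infer_instance
  obtain ⟨Cf, g', h', hTr⟩ := Pretriangulated.distinguished_cocone_triangle φ.f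
  have hmap := L.map_distinguished _ hTr
  have hzero : IsZero (L.obj Cf) := Triangle.isZero₃_of_isIso₁ _ hmap hf
  have h0 : L.map (𝟙 Cf) = L.map (0 : Cf ⟶ Cf) := by
    rw [L.map_id, L.map_zero]
    exact hzero.eq_of_src _ _
  rw [MorphismProperty.map_eq_iff_postcomp L S.W] at h0
  obtain ⟨P, σ, hσ, hfac⟩ := h0
  rw [Category.id_comp, zero_comp] at hfac
  obtain ⟨Q, p, q, hTriσ, hQ⟩ := hσ
  obtain ⟨r', hr'⟩ := Triangle.coyoneda_exact₃ _ (rot_of_distTriang _ hTriσ)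
    (𝟙 (Cf⟦(1 : ℤ)⟧)) (by
      change 𝟙 (Cf⟦(1 : ℤ)⟧) ≫ (-(shiftFunctor C (1:ℤ)).map σ) = 0
      rw [hfac, Functor.map_zero, neg_zero, comp_zero])
  have hCf1 : T.P (Cf⟦(1 : ℤ)⟧) := hT r' q hr'.symm (hS _ hQ)
  have hCf : T.P Cf := thick_unshift T hT 1 hCf1
  exact thick_ext₁ T hT _ hTr hY' hCf

lemma key_retract (hT : IsThickSubcategory T) (hS : ∀ X, S.P X → T.P X)
    {X U : C} (u : L.obj X ⟶ L.obj U) (v : L.obj U ⟶ L.obj X)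
    (huv : u ≫ v = 𝟙 _) (hU : T.P U) : T.P X := by
  obtain ⟨φ, hφ⟩ := Localization.exists_leftFraction L S.W u
  obtain ⟨Z, g, h, hTri, hZ⟩ := φ.hs
  have hY' : T.P φ.Y' := thick_ext₂ T hT _ hTri hU (hS _ hZ)
  have hsiso : IsIso (L.map φ.s) := Localization.inverts L S.W _ φ.hs
  have hρ : L.map φ.f ≫ (inv (L.map φ.s) ≫ v) = 𝟙 _ := by
    rw [← MorphismProperty.LeftFraction.map_comp_map_s φ L (Localization.inverts L S.W),
      Category.assoc, IsIso.hom_inv_id_assoc, ← hφ, huv]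
  haveI : IsSplitMono (L.map φ.f) := IsSplitMono.mk' ⟨inv (L.map φ.s) ≫ v, hρ⟩
  obtain ⟨Cf, g', h', hTr⟩ := Pretriangulated.distinguished_cocone_triangle φ.f
  have hmap := L.map_distinguished _ hTr
  have hmor3 : (L.mapTriangle.obj (Triangle.mk φ.f g' h')).mor₃ = 0 :=
    Triangle.mor₃_eq_zero_of_mono₁ _ hmap (by change Mono (L.map φ.f); infer_instance)
  obtain ⟨e1, _, _⟩ := exists_iso_binaryBiproduct_of_distTriang _ hmap hmor3
  have hbi := L.map_distinguished _ (binaryBiproductTriangle_distinguished X Cf)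
  have hbimor3 : (L.mapTriangle.obj (binaryBiproductTriangle X Cf)).mor₃ = 0 := by
    change L.map (0 : Cf ⟶ X⟦(1:ℤ)⟧) ≫ _ = 0
    rw [L.map_zero]
    exact zero_comp
  obtain ⟨e2, _, _⟩ := exists_iso_binaryBiproduct_of_distTriang _ hbi hbimor3
  have hXCf : T.P (X ⊞ Cf) := key_iso T S L hT hS (e2 ≪≫ e1.symm) hY'
  exact hT biprod.inl biprod.fst biprod.inl_fst hXCf

end KeyLemmas
theorem generatesTriangulated_of_filtration
    -- the triangulated categories `D_0, D_1, ..., D_r`, with `D = D_r`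
    (r : ℕ) (𝒟 : ℕ → Type u) [∀ i, Category.{v} (𝒟 i)] [∀ i, HasZeroObject (𝒟 i)]
    [∀ i, Preadditive (𝒟 i)] [∀ i, HasShift (𝒟 i) ℤ]
    [∀ i (n : ℤ), (shiftFunctor (𝒟 i) n).Additive] [∀ i, Pretriangulated (𝒟 i)]
    [∀ i, IsTriangulated (𝒟 i)]
    -- `D_0` is the zero category
    (h0 : ∀ X : 𝒟 0, IsZero X)
    -- the triangulated functors `F_i : D_i ⥤ D_{i+1}`
    (F : ∀ i, 𝒟 i ⥤ 𝒟 (i + 1)) [∀ i, (F i).CommShift ℤ] [∀ i, (F i).IsTriangulated]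
    -- the compositions `G i = F_{r-1} ∘ ⋯ ∘ F_i : D_i ⥤ D_r`
    (G : ∀ i, 𝒟 i ⥤ 𝒟 r) (eGr : G r ≅ 𝟭 (𝒟 r))
    (eG : ∀ i, i < r → (G i ≅ F i ⋙ G (i + 1)))
    -- the families of objects `X^i_a`, `a ∈ A_i`
    (A : ℕ → Type w) (X : ∀ i, A i → 𝒟 i)
    -- the Verdier quotients `D_{i+1}/⟨F_i⟩` for `i < r`
    (𝒬 : ℕ → Type u') [∀ i, Category.{v'} (𝒬 i)] [∀ i, HasZeroObject (𝒬 i)]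
    [∀ i, Preadditive (𝒬 i)] [∀ i, HasShift (𝒬 i) ℤ]
    [∀ i (n : ℤ), (shiftFunctor (𝒬 i) n).Additive] [∀ i, Pretriangulated (𝒬 i)]
    (L : ∀ i, 𝒟 (i + 1) ⥤ 𝒬 i) [∀ i, (L i).CommShift ℤ] [∀ i, (L i).IsTriangulated]
    (hLoc : ∀ i, i < r → (L i).IsLocalization (thickClosure ((F i).essImage)).W)
    (hVerdier : ∀ i, i < r → ∀ T : Triangle (𝒬 i),
      (T ∈ distTriang (𝒬 i)) ↔ T ∈ (L i).essImageDistTriang)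
    -- the images of the `X^{i+1}_a` generate the Verdier quotient `D_{i+1}/⟨F_i⟩`
    (hGen : ∀ i, i < r →
      GeneratesTriangulated (Set.range fun a : A (i + 1) => (L i).obj (X (i + 1) a))) :
    -- conclusion: the objects `G i (X^i_a)`, `1 ≤ i ≤ r`, `a ∈ A_i`, generate `D_r`
    GeneratesTriangulated
      {Z : 𝒟 r | ∃ (i : ℕ) (a : A i), 1 ≤ i ∧ i ≤ r ∧ (G i).obj (X i a) = Z} := by
  intro T hT hA
  -- Step 1: triangulated replacements for the functors `G i`
  have hE : ∀ k i, i + k = r → ∃ (E : 𝒟 i ⥤ 𝒟 r) (_ : E.CommShift ℤ),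
      E.IsTriangulated ∧ Nonempty (G i ≅ E) := by
    intro k
    induction k with
    | zero =>
      intro i hi
      obtain rfl : i = r := by omega
      exact ⟨𝟭 _, inferInstance, inferInstance, ⟨eGr⟩⟩
    | succ k ih =>
      intro i hi
      obtain ⟨E', c', hE', ⟨e'⟩⟩ := ih (i + 1) (by omega)
      letI := c'
      haveI := hE'
      exact ⟨F i ⋙ E', inferInstance, inferInstance,
        ⟨eG i (by omega) ≪≫ Functor.isoWhiskerLeft (F i) e'⟩⟩
  -- Step 2: the main induction
  have main : ∀ i, i ≤ r → ∀ Z : 𝒟 i, T.P ((G i).obj Z) := by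
    intro i
    induction i with
    | zero =>
      intro _ Z
      obtain ⟨E, c, hEt, ⟨e⟩⟩ := hE r 0 (by omega)
      letI := c
      haveI := hEt
      exact thick_iso T hT (e.app Z) (thick_zero T hT (E.map_isZero (h0 Z)))
    | succ i ih =>
      intro hi Z
      have hir : i < r := by omega
      obtain ⟨E₁, c₁, hE₁, ⟨e₁⟩⟩ := hE (r - (i + 1)) (i + 1) (by omega)
      letI := c₁
      haveI := hE₁
      haveI := hLoc i hir
      -- the thick subcategory of `𝒟 (i+1)` of objects sent into `T`
      let S' : Triangulated.Subcategory (𝒟 (i + 1)) := Triangulated.Subcategory.mk'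
        (fun Z' => T.P (E₁.obj Z'))
        (thick_zero T hT (E₁.map_isZero (isZero_zero _)))
        (fun Z' n h => thick_iso T hT ((E₁.commShiftIso n).app Z') (T.shift _ n h))
        (fun Tr hTr h₁ h₃ =>
          thick_ext₂ T hT (E₁.mapTriangle.obj Tr) (E₁.map_distinguished Tr hTr) h₁ h₃)
      have hS'thick : IsThickSubcategory S' := by
        intro X' Y' i' r' hir' hY'
        exact hT (E₁.map i') (E₁.map r') (by rw [← E₁.map_comp, hir', E₁.map_id]) hY'
      have hSsub : ∀ X', (thickClosure ((F i).essImage)).P X' → S'.P X' := by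
        intro X' hX'
        refine hX' S' hS'thick ?_
        intro Y' hY'
        obtain ⟨Y₀, ⟨eY⟩⟩ := hY'
        exact thick_iso T hT
          (E₁.mapIso eY.symm ≪≫ (e₁.app ((F i).obj Y₀)).symm ≪≫ ((eG i hir).app Y₀).symm)
          (ih (by omega) Y₀)
      -- the thick subcategory of `𝒬 i` of objects isomorphic to images of objects of `S'`
      let T' : Triangulated.Subcategory (𝒬 i) := Triangulated.Subcategory.mk'
        (fun Wo => ∃ Z', Nonempty (Wo ≅ (L i).obj Z') ∧ S'.P Z')
        ⟨0, ⟨(isZero_zero _).iso ((L i).map_isZero (isZero_zero _))⟩,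
          thick_zero T hT (E₁.map_isZero (isZero_zero _))⟩
        (fun Wo n hWo => by
          obtain ⟨Z', ⟨eW⟩, hZ'⟩ := hWo
          exact ⟨Z'⟦n⟧, ⟨(shiftFunctor _ n).mapIso eW ≪≫ (((L i).commShiftIso n).app Z').symm⟩,
            S'.shift Z' n hZ'⟩)
        (fun Tr hTr h₁ h₃ => by
          obtain ⟨Tr₀, eTr, hTr₀⟩ := (hVerdier i hir Tr).1 hTr
          obtain ⟨Z₁, ⟨eZ₁⟩, hZ₁⟩ := h₁
          obtain ⟨Z₃, ⟨eZ₃⟩, hZ₃⟩ := h₃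
          have m₁ : S'.P Tr₀.obj₁ := key_iso S' (thickClosure ((F i).essImage)) (L i)
            hS'thick hSsub ((Pretriangulated.Triangle.π₁.mapIso eTr).symm ≪≫ eZ₁) hZ₁
          have m₃ : S'.P Tr₀.obj₃ := key_iso S' (thickClosure ((F i).essImage)) (L i)
            hS'thick hSsub ((Pretriangulated.Triangle.π₃.mapIso eTr).symm ≪≫ eZ₃) hZ₃
          exact ⟨Tr₀.obj₂, ⟨Pretriangulated.Triangle.π₂.mapIso eTr⟩,
            thick_ext₂ S' hS'thick Tr₀ hTr₀ m₁ m₃⟩)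
      have hT'thick : IsThickSubcategory T' := by
        intro Xq Yq iq rq hiq hYq
        obtain ⟨Z', ⟨eY⟩, hZ'⟩ := hYq
        haveI := Localization.essSurj (L i) (thickClosure ((F i).essImage)).W
        have eX : (L i).obj ((L i).objPreimage Xq) ≅ Xq := (L i).objObjPreimageIso Xq
        refine ⟨(L i).objPreimage Xq, ⟨eX.symm⟩, ?_⟩
        refine key_retract S' (thickClosure ((F i).essImage)) (L i) hS'thick hSsub
          (eX.hom ≫ iq ≫ eY.hom) (eY.inv ≫ rq ≫ eX.inv) ?_ hZ'
        simp [reassoc_of% hiq]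
      have hgens : ∀ Wo ∈ Set.range (fun a : A (i + 1) => (L i).obj (X (i + 1) a)),
          T'.P Wo := by
        rintro _ ⟨a, rfl⟩
        exact ⟨X (i + 1) a, ⟨Iso.refl _⟩,
          thick_iso T hT (e₁.app (X (i + 1) a)).symm
            (hA _ ⟨i + 1, a, by omega, hi, rfl⟩)⟩
      obtain ⟨Z', ⟨eZ⟩, hZ'⟩ := hGen i hir T' hT'thick hgens ((L i).obj Z)
      exact thick_iso T hT (e₁.app Z)
        (key_iso S' (thickClosure ((F i).essImage)) (L i) hS'thick hSsub eZ hZ')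
  intro Xr
  exact thick_iso T hT (eGr.app Xr).symm (main r le_rfl Xr)
end

section
/- Let D be a triangulated category, let S be a triangulated subcategory of D, and let D′ be a triangulated subcategory of D containing S (so that S is also a triangulated subcategory of D′). Then the canonical triangulated functor D′/S → D/S between the Verdier quotients, induced by the inclusion D′ ⊆ D, is fully faithful. -/
/-!
STATEMENT 1: Let `D` be a triangulated category, `S` a triangulated subcategory of `D`,
and `D′` a triangulated subcategory of `D` containing `S`. Then the canonical
triangulated functor `D′/S → D/S` between the Verdier quotients, induced by the
inclusion `D′ ⊆ D`, is fully faithful.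

Here the triangulated subcategory `D′` is encoded by a fully faithful triangulated
functor `ι : D′ ⥤ D` from a triangulated category, `S` is a triangulated subcategory of
`D` whose objects lie in (the essential image of) `D′`, and `S′` is the corresponding
triangulated subcategory of `D′`.  The Verdier quotients are encoded as arbitrary
localization functors with respect to the classes `S.trW` (resp. `S′.W`) of morphisms
whose cone lies in `S` (resp. `S′`), and the canonical induced functor is any functor
`F : D′/S′ ⥤ D/S` commuting with the quotient functors and the inclusion.
-/

open CategoryTheory Limits Pretriangulated Triangulated

namespace VerdierAux

variable {D : Type*} [Category D] [HasZeroObject D] [Preadditive D] [HasShift D ℤ]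
  [∀ n : ℤ, (shiftFunctor D n).Additive] [Pretriangulated D]
  {D' : Type*} [Category D'] [HasZeroObject D'] [Preadditive D'] [HasShift D' ℤ]
  [∀ n : ℤ, (shiftFunctor D' n).Additive] [Pretriangulated D']
  (ι : D' ⥤ D) [ι.CommShift ℤ] [ι.IsTriangulated] [ι.Full] [ι.Faithful]
  (S : ObjectProperty D) [S.IsTriangulated] [S.IsClosedUnderIsomorphisms]
  (S' : ObjectProperty D') [S'.IsTriangulated]
  (hS' : ∀ X : D', S' X ↔ S (ι.obj X))
  (hSD' : ∀ X : D, S X → ∃ Y : D', Nonempty (ι.obj Y ≅ X))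

include hS' in
lemma W_map_iff {X Y : D'} (g : X ⟶ Y) : S'.trW g ↔ S.trW (ι.map g) := by
  constructor
  · rintro ⟨Z, h, k, hT, hZ⟩
    exact ⟨_, _, _, ι.map_distinguished _ hT, (hS' _).1 hZ⟩
  · rintro ⟨Z, h, k, hT, hZ⟩
    obtain ⟨Z', h', k', mem⟩ := Pretriangulated.distinguished_cocone_triangle g
    obtain ⟨E, _, _⟩ := exists_iso_of_arrow_iso _ _ (ι.map_distinguished _ mem) hT (Iso.refl _)
    exact ⟨Z', h', k', mem, (hS' _).2 (S.prop_of_iso (Triangle.π₃.mapIso E).symm hZ)⟩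

include hS' hSD' in
lemma exists_fraction_denom {Y : D'} {Z : D} (s : ι.obj Y ⟶ Z) (hs : S.trW s) :
    ∃ (Z' : D') (s' : Y ⟶ Z') (e' : ι.obj Z' ≅ Z), S'.trW s' ∧ ι.map s' ≫ e'.hom = s := by
  obtain ⟨Cn, g, k, hT, hC⟩ := hs
  obtain ⟨c, ⟨ec⟩⟩ := hSD' Cn hC
  have hc : S' c := (hS' c).2 (S.prop_of_iso ec.symm hC)
  have hT' := inv_rot_of_distTriang _ hT
  let isoC : ι.obj (c⟦(-1:ℤ)⟧) ≅ Cn⟦(-1:ℤ)⟧ :=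
    (ι.commShiftIso (-1:ℤ)).app c ≪≫ (shiftFunctor D (-1:ℤ)).mapIso ec
  let m' : c⟦(-1:ℤ)⟧ ⟶ Y := ι.preimage (isoC.hom ≫ (Triangle.mk s g k).invRotate.mor₁)
  obtain ⟨Z', s', k', mem⟩ := Pretriangulated.distinguished_cocone_triangle m'
  obtain ⟨key, hkey⟩ : ∃ key : ι.mapTriangle.obj (Triangle.mk m' s' k') ≅
        (Triangle.mk s g k).invRotate, key.hom.hom₂ = 𝟙 (ι.obj Y) :=
    ⟨isoTriangleOfIso₁₂ _ _ (ι.map_distinguished _ mem) hT' isoC (Iso.refl _) (by exact (Category.comp_id _).trans (ι.map_preimage _)),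
      rfl⟩
  refine ⟨Z', s', Triangle.π₃.mapIso key, ?_, ?_⟩
  · exact ⟨_, _, _, rot_of_distTriang _ mem, S'.le_shift 1 _ (S'.le_shift (-1) _ hc)⟩
  · have h2 := key.hom.comm₂
    rw [hkey] at h2
    dsimp at h2 ⊢
    exact h2.trans (Category.id_comp _)

end VerdierAux

theorem full_and_faithful_verdier_quotient_of_subcategory
    {D : Type u} [Category.{v} D] [HasZeroObject D] [Preadditive D] [HasShift D ℤ]
    [∀ n : ℤ, (shiftFunctor D n).Additive] [Pretriangulated D] [IsTriangulated D]
    {D' : Type u₁} [Category.{v₁} D'] [HasZeroObject D'] [Preadditive D'] [HasShift D' ℤ]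
    [∀ n : ℤ, (shiftFunctor D' n).Additive] [Pretriangulated D'] [IsTriangulated D']
    -- the inclusion of the triangulated subcategory `D′` of `D`
    (ι : D' ⥤ D) [ι.CommShift ℤ] [ι.IsTriangulated] [ι.Full] [ι.Faithful]
    -- the triangulated subcategory `S` of `D`, and the corresponding subcategory of `D′`
    (S : ObjectProperty D) [S.IsTriangulated] [S.IsClosedUnderIsomorphisms]
    (S' : ObjectProperty D') [S'.IsTriangulated] [S'.IsClosedUnderIsomorphisms]
    (hS' : ∀ X : D', S' X ↔ S (ι.obj X))
    -- `S` is contained in `D′`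
    (hSD' : ∀ X : D, S X → ∃ Y : D', Nonempty (ι.obj Y ≅ X))
    -- the Verdier quotients `D/S` and `D′/S`
    {E : Type u'} [Category.{v'} E] (Q : D ⥤ E) [Q.IsLocalization S.trW]
    {E' : Type u₁'} [Category.{v₁'} E'] (Q' : D' ⥤ E') [Q'.IsLocalization S'.trW]
    -- the canonical functor induced by the inclusion
    (F : E' ⥤ E) (e : Q' ⋙ F ≅ ι ⋙ Q) :
    F.Full ∧ F.Faithful := by
  have hinv : ∀ {X Y : D'} (u : X ⟶ Y), F.map (Q'.map u)
      = e.hom.app X ≫ Q.map (ι.map u) ≫ e.inv.app Y := by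
    intro X Y u
    have h := e.hom.naturality u
    dsimp at h
    rw [← cancel_mono (e.hom.app Y)]
    simpa using h
  -- conjugation formula for fractions
  have hfrac : ∀ {X Y : D'} (ψ : S'.trW.LeftFraction X Y),
      F.map (ψ.map Q' (Localization.inverts Q' S'.trW)) =
        e.hom.app X ≫ (MorphismProperty.LeftFraction.mk (ι.map ψ.f) (ι.map ψ.s)
          ((VerdierAux.W_map_iff ι S S' hS' ψ.s).1 ψ.hs)).map Q (Localization.inverts Q S.trW)
          ≫ e.inv.app Y := by
    intro X Y ψ
    have h1 : IsIso (Q'.map ψ.s) := Localization.inverts Q' S'.trW _ ψ.hs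
    rw [← cancel_mono (F.map (Q'.map ψ.s)), ← F.map_comp,
      MorphismProperty.LeftFraction.map_comp_map_s, hinv, hinv]
    simp only [Category.assoc, Iso.inv_hom_id_app_assoc, cancel_epi]
    exact (MorphismProperty.LeftFraction.map_comp_map_s_assoc
      (MorphismProperty.LeftFraction.mk (ι.map ψ.f) (ι.map ψ.s)
        ((VerdierAux.W_map_iff ι S S' hS' ψ.s).1 ψ.hs)) Q
      (Localization.inverts Q S.trW) (e.inv.app ψ.Y')).symm
  have full_core : ∀ (X Y : D') (a : F.obj (Q'.obj X) ⟶ F.obj (Q'.obj Y)),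
      ∃ g : Q'.obj X ⟶ Q'.obj Y, F.map g = a := by
    intro X Y a
    obtain ⟨φ, hφ⟩ := Localization.exists_leftFraction Q S.trW
      (show Q.obj (ι.obj X) ⟶ Q.obj (ι.obj Y) from e.inv.app X ≫ a ≫ e.hom.app Y)
    obtain ⟨Z', s', e', hs', hcomm⟩ := VerdierAux.exists_fraction_denom ι S S' hS' hSD' φ.s φ.hs
    have hιs' : ι.map s' = φ.s ≫ e'.inv := by rw [← hcomm]; simp
    refine ⟨(MorphismProperty.LeftFraction.mk (ι.preimage (φ.f ≫ e'.inv)) s' hs').map Q'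
      (Localization.inverts Q' S'.trW), ?_⟩
    rw [hfrac]
    have hiso : IsIso (Q.map (ι.map s')) := by
      rw [hιs', Q.map_comp]
      have : IsIso (Q.map φ.s) := Localization.inverts Q S.trW _ φ.hs
      infer_instance
    have heq : (MorphismProperty.LeftFraction.mk
          (ι.map (ι.preimage (φ.f ≫ e'.inv))) (ι.map s')
          ((VerdierAux.W_map_iff ι S S' hS' s').1 hs')).map Q (Localization.inverts Q S.trW)
        = φ.map Q (Localization.inverts Q S.trW) := by
      rw [← cancel_mono (Q.map (ι.map s')), MorphismProperty.LeftFraction.map_comp_map_s]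
      conv_rhs => rw [hιs', Q.map_comp, MorphismProperty.LeftFraction.map_comp_map_s_assoc]
      rw [ι.map_preimage, Q.map_comp]
    rw [heq, ← hφ]
    simp
  have faithful_core : ∀ (X Y : D') (g₁ g₂ : Q'.obj X ⟶ Q'.obj Y),
      F.map g₁ = F.map g₂ → g₁ = g₂ := by
    intro X Y g₁ g₂ hg
    obtain ⟨ψ₁, rfl⟩ := Localization.exists_leftFraction Q' S'.trW g₁
    obtain ⟨ψ₂, rfl⟩ := Localization.exists_leftFraction Q' S'.trW g₂
    rw [hfrac, hfrac] at hg
    simp only [cancel_epi, cancel_mono] at hg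
    rw [MorphismProperty.LeftFraction.map_eq_iff] at hg
    obtain ⟨Z, t₁, t₂, hst, hft, ht⟩ := hg
    obtain ⟨Z'', u, e'', hu, hcomm⟩ :=
      VerdierAux.exists_fraction_denom ι S S' hS' hSD' (ι.map ψ₁.s ≫ t₁) ht
    have h₁ : ι.map (ψ₁.s ≫ ι.preimage (t₁ ≫ e''.inv)) = ι.map u := by
      rw [ι.map_comp, ι.map_preimage, ← Category.assoc, ← hcomm]; simp
    rw [MorphismProperty.LeftFraction.map_eq_iff]
    refine ⟨Z'', ι.preimage (t₁ ≫ e''.inv), ι.preimage (t₂ ≫ e''.inv), ?_, ?_, ?_⟩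
    · apply ι.map_injective
      simp only [ι.map_comp, ι.map_preimage]
      rw [← Category.assoc, ← Category.assoc, hst]
    · apply ι.map_injective
      simp only [ι.map_comp, ι.map_preimage]
      rw [← Category.assoc, ← Category.assoc, hft]
    · rw [show ψ₁.s ≫ ι.preimage (t₁ ≫ e''.inv) = u from ι.map_injective h₁]
      exact hu
  have : Q'.EssSurj := Localization.essSurj Q' S'.trW
  constructor
  · refine ⟨fun {A B} a => ?_⟩
    obtain ⟨g, hg⟩ := full_core (Q'.objPreimage A) (Q'.objPreimage B)
      (F.map (Q'.objObjPreimageIso A).hom ≫ a ≫ F.map (Q'.objObjPreimageIso B).inv)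
    refine ⟨(Q'.objObjPreimageIso A).inv ≫ g ≫ (Q'.objObjPreimageIso B).hom, ?_⟩
    simp [hg]
  · refine ⟨fun {A B} a b h => ?_⟩
    have := faithful_core (Q'.objPreimage A) (Q'.objPreimage B)
      ((Q'.objObjPreimageIso A).hom ≫ a ≫ (Q'.objObjPreimageIso B).inv)
      ((Q'.objObjPreimageIso A).hom ≫ b ≫ (Q'.objObjPreimageIso B).inv)
      (by simp [h])
    rw [← cancel_epi (Q'.objObjPreimageIso A).hom, ← cancel_mono (Q'.objObjPreimageIso B).inv]
    simpa using this
end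

section
/- Let R be a commutative noetherian ring, let I ⊆ R be an ideal, and let A be an R-algebra which is finitely generated as an R-module. Let M be a left A-module which is I-power torsion. Then there exist a left A-module Q which is I-power torsion and is an injective object of the category of left A-modules, together with an injective homomorphism of left A-modules M → Q. -/
/-!
STATEMENT 3: Let `R` be a commutative noetherian ring, `I ⊆ R` an ideal, and `A`
an `R`-algebra which is finitely generated as an `R`-module. Every `I`-power torsion
left `A`-module `M` embeds into an `I`-power torsion left `A`-module `Q` which is
an injective object of the category of left `A`-modules.
-/

open CategoryTheory

/-- A left `A`-module `M` (for `A` an `R`-algebra) is `I`-power torsion if every element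
is annihilated by some power of the ideal `I`. -/
def IsIPowerTorsion {R : Type u} [CommRing R] (I : Ideal R) (A : Type u) [Ring A]
    [Algebra R A] (M : Type u) [AddCommGroup M] [Module A M] : Prop :=
  ∀ m : M, ∃ n : ℕ, ∀ r ∈ I ^ n, algebraMap R A r • m = 0

section Aux

variable {R : Type u} [CommRing R] (I : Ideal R) (A : Type u) [Ring A] [Algebra R A]
variable (E : Type u) [AddCommGroup E] [Module A E]

/-- Elements of `E` killed by `I ^ n`, as an `A`-submodule (using centrality of image of `R`). -/
def annPow (n : ℕ) : Submodule A E where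
  carrier := {e | ∀ r ∈ I ^ n, algebraMap R A r • e = 0}
  zero_mem' := fun r _ => smul_zero _
  add_mem' := by
    intro a b ha hb r hr
    rw [smul_add, ha r hr, hb r hr, add_zero]
  smul_mem' := by
    intro c e he r hr
    rw [smul_smul, Algebra.commutes r c, mul_smul, he r hr, smul_zero]

/-- The `I`-power torsion elements of `E`, as an `A`-submodule. -/
def torsionSub : Submodule A E where
  carrier := {e | ∃ n : ℕ, ∀ r ∈ I ^ n, algebraMap R A r • e = 0}
  zero_mem' := ⟨0, fun r _ => smul_zero _⟩
  add_mem' := by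
    rintro a b ⟨n, hn⟩ ⟨m, hm⟩
    refine ⟨n ⊔ m, fun r hr => ?_⟩
    rw [smul_add, hn r (Ideal.pow_le_pow_right le_sup_left hr),
      hm r (Ideal.pow_le_pow_right le_sup_right hr), add_zero]
  smul_mem' := by
    rintro c e ⟨n, hn⟩
    refine ⟨n, fun r hr => ?_⟩
    rw [smul_smul, Algebra.commutes r c, mul_smul, hn r hr, smul_zero]

variable {E} in
lemma mem_torsionSub {e : E} : e ∈ torsionSub I A E ↔ ∃ n : ℕ, ∀ r ∈ I ^ n, algebraMap R A r • e = 0 :=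
  Iff.rfl

/-- The left ideal of `A` generated by `I ^ m`. -/
def powIdeal (m : ℕ) : Ideal A where
  carrier := (I ^ m • ⊤ : Submodule R A)
  zero_mem' := Submodule.zero_mem _
  add_mem' := fun ha hb => Submodule.add_mem _ ha hb
  smul_mem' := by
    intro c x hx
    refine Submodule.smul_induction_on hx (fun r hr b _ => ?_) (fun x y hx hy => ?_)
    · show c • (r • b) ∈ (I ^ m • ⊤ : Submodule R A)
      rw [smul_comm c r b]
      exact Submodule.smul_mem_smul hr trivial
    · show c • (x + y) ∈ (I ^ m • ⊤ : Submodule R A)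
      rw [smul_add]; exact Submodule.add_mem _ hx hy

lemma algebraMap_mem_powIdeal {m : ℕ} {r : R} (hr : r ∈ I ^ m) :
    algebraMap R A r ∈ powIdeal I A m := by
  show algebraMap R A r ∈ (I ^ m • ⊤ : Submodule R A)
  rw [Algebra.algebraMap_eq_smul_one r]
  exact Submodule.smul_mem_smul hr trivial

end Aux

section Main

variable (R : Type u) [CommRing R] [IsNoetherianRing R] (I : Ideal R)
variable (A : Type u) [Ring A] [Algebra R A] [Module.Finite R A]
variable (E : Type u) [AddCommGroup E] [Module A E]

/-- Key lemma: the `I`-power torsion submodule of an injective `A`-module satisfies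
Baer's criterion. -/
theorem baer_torsionSub (hE : Module.Injective A E) :
    Module.Baer A (torsionSub I A E) := by
  intro J g
  classical
  set F : ↥J →ₗ[A] E := (torsionSub I A E).subtype ∘ₗ g with hF
  -- `J` is finitely generated as an `R`-module
  obtain ⟨s, hs⟩ : (J.restrictScalars R).FG := IsNoetherian.noetherian _
  -- a uniform torsion exponent for the image of `F`
  have hchoice : ∀ a : ↥J, ∃ n : ℕ, F a ∈ annPow I A E n := by
    intro a
    obtain ⟨n, hn⟩ := (g a).2
    exact ⟨n, hn⟩
  choose nf hnf using hchoice
  set n : ℕ := s.sup (fun a => if h : a ∈ J then nf ⟨a, h⟩ else 0) with hn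
  have annPow_mono : ∀ {n₁ n₂ : ℕ}, n₁ ≤ n₂ → annPow I A E n₁ ≤ annPow I A E n₂ := by
    intro n₁ n₂ h e he r hr
    exact he r (Ideal.pow_le_pow_right h hr)
  -- Claim 1: `F` lands in `annPow n`
  have claim1 : ∀ (x : A) (hx : x ∈ J), F ⟨x, hx⟩ ∈ annPow I A E n := by
    set P : Ideal A := Submodule.map J.subtype (Submodule.comap F (annPow I A E n)) with hP
    have hsub : ∀ a ∈ s, a ∈ J := by
      intro a ha
      have : a ∈ Submodule.span R (s : Set A) := Submodule.subset_span ha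
      rw [hs] at this
      exact this
    have hsP : (s : Set A) ⊆ (P : Set A) := by
      intro a ha
      refine ⟨⟨a, hsub a ha⟩, ?_, rfl⟩
      have : nf ⟨a, hsub a ha⟩ ≤ n := by
        have := Finset.le_sup (f := fun a => if h : a ∈ J then nf ⟨a, h⟩ else 0) ha
        simpa [dif_pos (hsub a ha)] using this
      exact annPow_mono this (hnf ⟨a, hsub a ha⟩)
    have hJP : J ≤ P := by
      intro x hx
      have hx' : x ∈ Submodule.span R (s : Set A) := by rw [hs]; exact hx
      have hx'' : x ∈ Submodule.span A (s : Set A) :=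
        Submodule.span_le_restrictScalars R A (s : Set A) hx'
      exact Submodule.span_le.mpr hsP hx''
    intro x hx
    obtain ⟨y, hy, hyx⟩ := hJP hx
    have : (⟨x, hx⟩ : ↥J) = y := Subtype.ext hyx.symm
    rw [this]; exact hy
  -- Artin–Rees
  obtain ⟨k, hk⟩ := Ideal.exists_pow_inf_eq_pow_smul I (M := A) (J.restrictScalars R)
  set m : ℕ := k + n with hm
  have hAR : (I ^ m • ⊤ : Submodule R A) ⊓ J.restrictScalars R ≤
      I ^ n • (J.restrictScalars R) := by
    rw [hk m (Nat.le_add_right k n)]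
    have : m - k = n := by omega
    rw [this]
    exact Submodule.smul_mono le_rfl inf_le_right
  -- Claim 2: `F` vanishes on `J ⊓ powIdeal m`
  have claim2 : ∀ (x : A) (hx : x ∈ J), x ∈ powIdeal I A m → F ⟨x, hx⟩ = 0 := by
    intro x hx hxm
    have hx' : x ∈ I ^ n • (J.restrictScalars R) := hAR ⟨hxm, hx⟩
    have : ∃ h : x ∈ J, F ⟨x, h⟩ = 0 := by
      refine Submodule.smul_induction_on hx' ?_ ?_
      · intro r hr y hy
        have hmem : r • y ∈ J := by
          rw [Algebra.smul_def]; exact J.smul_mem _ hy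
        refine ⟨hmem, ?_⟩
        have h1 : (⟨r • y, hmem⟩ : ↥J) = algebraMap R A r • ⟨y, hy⟩ :=
          Subtype.ext (by simp [Algebra.smul_def])
        rw [h1, map_smul]
        exact claim1 y hy r hr
      · rintro x y ⟨hx1, hx2⟩ ⟨hy1, hy2⟩
        have hmem := J.add_mem hx1 hy1
        refine ⟨hmem, ?_⟩
        have h1 : (⟨x + y, hmem⟩ : ↥J) = ⟨x, hx1⟩ + ⟨y, hy1⟩ := Subtype.ext rfl
        rw [h1, map_add, hx2, hy2, add_zero]
    obtain ⟨h, hFh⟩ := this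
    convert hFh using 2
  -- the quotient construction
  set 𝔞 : Ideal A := powIdeal I A m with h𝔞
  set π : A →ₗ[A] A ⧸ 𝔞 := 𝔞.mkQ with hπ
  set q : ↥J →ₗ[A] A ⧸ 𝔞 := π ∘ₗ J.subtype with hq
  have hker : LinearMap.ker q ≤ LinearMap.ker F := by
    intro y hy
    have : (y : A) ∈ 𝔞 := by
      have : π (y : A) = 0 := hy
      rwa [hπ, Submodule.mkQ_apply, Submodule.Quotient.mk_eq_zero] at this
    exact claim2 y.1 y.2 this
  set ψ : (↥J ⧸ LinearMap.ker q) →ₗ[A] E := (LinearMap.ker q).liftQ F hker with hψ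
  set α := LinearMap.quotKerEquivRange q with hα
  set gbar : ↥(LinearMap.range q) →ₗ[A] E := ψ ∘ₗ (α.symm : _ →ₗ[A] _) with hgbar
  obtain ⟨h, hh⟩ := hE.out (LinearMap.range q).subtype (Submodule.injective_subtype _) gbar
  set e : E := h (π 1) with he
  have key : ∀ (y : ↥J), (y : A) • e = F y := by
    intro y
    have h1 : (y : A) • e = h ((y : A) • π 1) := (map_smul h _ _).symm
    have h2 : (y : A) • π 1 = π (y : A) := by
      rw [← map_smul]; congr 1; rw [smul_eq_mul, mul_one]
    have h3 : π (y : A) = (LinearMap.range q).subtype ⟨q y, ⟨y, rfl⟩⟩ := rfl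
    rw [h1, h2, h3, hh ⟨q y, ⟨y, rfl⟩⟩]
    have h4 : α (Submodule.Quotient.mk y) = ⟨q y, ⟨y, rfl⟩⟩ :=
      Subtype.ext (LinearMap.quotKerEquivRange_apply_mk q y)
    have h5 : α.symm ⟨q y, ⟨y, rfl⟩⟩ = Submodule.Quotient.mk y := by
      rw [← h4, LinearEquiv.symm_apply_apply]
    show ψ (α.symm ⟨q y, ⟨y, rfl⟩⟩) = F y
    rw [h5]
    exact Submodule.liftQ_apply _ F y
  have heQ : e ∈ torsionSub I A E := by
    refine ⟨m, fun r hr => ?_⟩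
    have h1 : algebraMap R A r • e = h (algebraMap R A r • π 1) := (map_smul h _ _).symm
    have h2 : algebraMap R A r • π 1 = π (algebraMap R A r) := by
      rw [← map_smul]; congr 1; rw [smul_eq_mul, mul_one]
    have h3 : π (algebraMap R A r) = 0 := by
      rw [hπ, Submodule.mkQ_apply, Submodule.Quotient.mk_eq_zero]
      exact algebraMap_mem_powIdeal I A hr
    rw [h1, h2, h3, map_zero]
  refine ⟨LinearMap.toSpanSingleton A (torsionSub I A E) ⟨e, heQ⟩, fun x hx => ?_⟩
  apply Subtype.ext
  show x • e = F ⟨x, hx⟩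
  exact key ⟨x, hx⟩

end Main

theorem exists_injective_torsion_embedding
    (R : Type u) [CommRing R] [IsNoetherianRing R] (I : Ideal R)
    (A : Type u) [Ring A] [Algebra R A] [Module.Finite R A]
    (M : Type u) [AddCommGroup M] [Module A M]
    (hM : IsIPowerTorsion I A M) :
    ∃ Q : ModuleCat.{u} A, IsIPowerTorsion I A Q ∧ Injective Q ∧
      ∃ f : M →ₗ[A] Q, Function.Injective f := by
  classical
  let Mc : ModuleCat.{u} A := ModuleCat.of A M
  let Ec : ModuleCat.{u} A := Injective.under Mc
  let ι : Mc ⟶ Ec := Injective.ι Mc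
  have hι : Function.Injective ι := (ModuleCat.mono_iff_injective ι).mp inferInstance
  haveI : CategoryTheory.Injective (ModuleCat.of A ↥Ec) := by
    show CategoryTheory.Injective Ec
    infer_instance
  have hE : Module.Injective A ↥Ec := Module.injective_module_of_injective_object A ↥Ec
  set Qs : Submodule A ↥Ec := torsionSub I A ↥Ec with hQs
  have hBaer : Module.Baer A ↥Qs := baer_torsionSub R I A ↥Ec hE
  have hQinj : Module.Injective A ↥Qs := hBaer.injective
  refine ⟨ModuleCat.of A ↥Qs, ?_, ?_, ?_⟩
  · intro q
    obtain ⟨n, hn⟩ := q.2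
    exact ⟨n, fun r hr => Subtype.ext (hn r hr)⟩
  · exact Module.injective_object_of_injective_module A ↥Qs
  · have hmem : ∀ x : M, (ι.hom : M →ₗ[A] ↥Ec) x ∈ Qs := by
      intro x
      obtain ⟨n, hn⟩ := hM x
      refine ⟨n, fun r hr => ?_⟩
      rw [← map_smul, hn r hr, map_zero]
    refine ⟨LinearMap.codRestrict Qs (ι.hom : M →ₗ[A] ↥Ec) hmem, fun x y hxy => ?_⟩
    exact hι (congrArg Subtype.val hxy)
end

section
/- Let k be a commutative ring and let A be an associative unital k-algebra which is left noetherian. Let Q be an injective left A-module and let F be a flat k-module. Then the tensor product Q ⊗_k F, equipped with the left A-action through the first factor (a · (q ⊗ f) := (a·q) ⊗ f), is an injective left A-module. -/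
/-!
STATEMENT 8: Let `k` be a commutative ring and `A` an associative unital `k`-algebra
which is left noetherian. If `Q` is an injective left `A`-module and `F` is a flat
`k`-module, then `Q ⊗[k] F`, with the `A`-action through the first factor, is an
injective left `A`-module.
-/

open TensorProduct

universe u

section Aux

variable (k : Type u) [CommRing k] (A : Type u) [Ring A] [Algebra k A]
variable (Q : Type u) [AddCommGroup Q] [Module k Q] [Module A Q] [IsScalarTower k A Q]
variable (F : Type u) [AddCommGroup F] [Module k F]
variable {M M' : Type u} [AddCommGroup M] [Module A M] [AddCommGroup M'] [Module A M']

/-- Precomposition with an `A`-linear map, as a `k`-linear map on Hom modules. -/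
def precompQ (h : M' →ₗ[A] M) : (M →ₗ[A] Q) →ₗ[k] (M' →ₗ[A] Q) where
  toFun f := f ∘ₗ h
  map_add' _ _ := rfl
  map_smul' _ _ := rfl

def precompT (h : M' →ₗ[A] M) : (M →ₗ[A] Q ⊗[k] F) →ₗ[k] (M' →ₗ[A] Q ⊗[k] F) where
  toFun f := f ∘ₗ h
  map_add' _ _ := rfl
  map_smul' _ _ := rfl

/-- `phiAux f x : m ↦ f m ⊗ x`. -/
noncomputable def phiAux (f : M →ₗ[A] Q) (x : F) : M →ₗ[A] Q ⊗[k] F where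
  toFun m := f m ⊗ₜ[k] x
  map_add' m m' := by simp [add_tmul]
  map_smul' a m := by simp [smul_tmul']

noncomputable def phi : ((M →ₗ[A] Q) ⊗[k] F) →ₗ[k] (M →ₗ[A] Q ⊗[k] F) :=
  TensorProduct.lift (LinearMap.mk₂ k (phiAux k A Q F)
    (fun f g x => by ext m; exact add_tmul (f m) (g m) x)
    (fun c f x => by ext m; exact (smul_tmul' c (f m) x).symm)
    (fun f x y => by ext m; exact tmul_add (f m) x y)
    (fun c f x => by ext m; exact tmul_smul c (f m) x))

@[simp] lemma phi_tmul (f : M →ₗ[A] Q) (x : F) (m : M) :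
    phi k A Q F (f ⊗ₜ[k] x) m = f m ⊗ₜ[k] x := rfl

lemma phi_natural (h : M' →ₗ[A] M) (u : (M →ₗ[A] Q) ⊗[k] F) :
    phi k A Q F ((precompQ k A Q h).rTensor F u) = (phi k A Q F u) ∘ₗ h := by
  induction u using TensorProduct.induction_on with
  | zero => simp
  | tmul f x => ext m; rfl
  | add a b ha hb => simp only [map_add, ha, hb, LinearMap.add_comp]


noncomputable def homPiEquiv (n : ℕ) (N : Type u) [AddCommGroup N] [Module A N]
    [Module k N] [SMulCommClass A k N] : ((Fin n → A) →ₗ[A] N) ≃ₗ[k] (Fin n → N) :=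
  (LinearMap.lsum A (fun _ : Fin n => A) k).symm ≪≫ₗ
    LinearEquiv.piCongrRight (fun _ => LinearMap.ringLmapEquivSelf A k N)

lemma homPiEquiv_apply (n : ℕ) (N : Type u) [AddCommGroup N] [Module A N]
    [Module k N] [SMulCommClass A k N] (f : (Fin n → A) →ₗ[A] N) (i : Fin n) :
    homPiEquiv k A n N f i = f (Pi.single i 1) := by
  simp [homPiEquiv, LinearMap.single]
  rfl

noncomputable def piDistrib (n : ℕ) : ((Fin n → Q) ⊗[k] F) ≃ₗ[k] (Fin n → Q ⊗[k] F) :=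
  (TensorProduct.comm k _ F) ≪≫ₗ TensorProduct.piRight k k F (fun _ : Fin n => Q) ≪≫ₗ
    LinearEquiv.piCongrRight (fun _ => TensorProduct.comm k F Q)

@[simp] lemma piDistrib_tmul (n : ℕ) (v : Fin n → Q) (x : F) (i : Fin n) :
    piDistrib k Q F n (v ⊗ₜ[k] x) i = v i ⊗ₜ[k] x := by
  simp [piDistrib]

lemma phi_free_bijective (n : ℕ) :
    Function.Bijective (phi k A Q F (M := Fin n → A)) := by
  have key : ∀ u : ((Fin n → A) →ₗ[A] Q) ⊗[k] F,
      homPiEquiv k A n (Q ⊗[k] F) (phi k A Q F u) =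
        piDistrib k Q F n
          ((TensorProduct.congr (homPiEquiv k A n Q) (LinearEquiv.refl k F)) u) := by
    intro u
    induction u using TensorProduct.induction_on with
    | zero => simp
    | tmul f x =>
        funext i
        simp [homPiEquiv_apply, TensorProduct.congr_tmul]
    | add a b ha hb => simp only [map_add, ha, hb]
  have heq : (phi k A Q F (M := Fin n → A)) =
      fun u => (homPiEquiv k A n (Q ⊗[k] F)).symm (piDistrib k Q F n
        ((TensorProduct.congr (homPiEquiv k A n Q) (LinearEquiv.refl k F)) u)) := by
    funext u
    rw [← key, LinearEquiv.symm_apply_apply]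
  rw [heq]
  exact (homPiEquiv k A n (Q ⊗[k] F)).symm.bijective.comp
    ((piDistrib k Q F n).bijective.comp
      (TensorProduct.congr (homPiEquiv k A n Q) (LinearEquiv.refl k F)).bijective)


lemma phi_injective_of_fg [Module.Flat k F] [Module.Finite A M] :
    Function.Injective (phi k A Q F (M := M)) := by
  obtain ⟨n, p, hp⟩ := Module.Finite.exists_fin' A M
  rw [injective_iff_map_eq_zero]
  intro u hu
  have hpre : Function.Injective (precompQ k A Q p) := by
    intro f g hfg
    ext m
    obtain ⟨y, rfl⟩ := hp m
    exact DFunLike.congr_fun hfg y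
  have hinj : Function.Injective ((precompQ k A Q p).rTensor F) :=
    Module.Flat.rTensor_preserves_injective_linearMap _ hpre
  have h0 : (precompQ k A Q p).rTensor F u = 0 := by
    apply (phi_free_bijective k A Q F n).1
    rw [phi_natural, hu, map_zero]
    simp
  simpa using hinj (by simpa using h0)

end Aux

theorem injective_tensorProduct_flat_of_injective
    (k : Type u) [CommRing k] (A : Type u) [Ring A] [Algebra k A]
    [IsNoetherianRing A]
    (Q : Type u) [AddCommGroup Q] [Module k Q] [Module A Q] [IsScalarTower k A Q]
    (F : Type u) [AddCommGroup F] [Module k F] [Module.Flat k F]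
    (hQ : Module.Injective A Q) :
    Module.Injective A (Q ⊗[k] F) := by
  apply Module.Baer.injective
  intro I g
  haveI : Module.Finite A I := ⟨(Submodule.fg_top I).mpr (IsNoetherian.noetherian I)⟩
  obtain ⟨n, p, hp⟩ := Module.Finite.exists_fin' A I
  set K := LinearMap.ker p with hK
  haveI : Module.Finite A K := ⟨(Submodule.fg_top K).mpr (IsNoetherian.noetherian K)⟩
  -- exactness of Hom(I,Q) → Hom(Aⁿ,Q) → Hom(K,Q)
  have hexact : Function.Exact (precompQ k A Q p) (precompQ k A Q K.subtype) := by
    intro f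
    constructor
    · intro hf
      have hker : LinearMap.ker p ≤ LinearMap.ker f := fun x hx => by
        simpa [precompQ, LinearMap.coe_mk, AddHom.coe_mk] using DFunLike.congr_fun hf ⟨x, hx⟩
      let e := p.quotKerEquivOfSurjective hp
      refine ⟨(K.liftQ f hker) ∘ₗ e.symm.toLinearMap, ?_⟩
      apply LinearMap.ext
      intro m
      have he : e.symm (p m) = Submodule.Quotient.mk m := by
        apply e.injective
        rw [e.apply_symm_apply]
        rfl
      simp only [precompQ, LinearMap.coe_mk, AddHom.coe_mk, LinearMap.comp_apply,
        LinearEquiv.coe_toLinearMap, he]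
      simp
    · rintro ⟨f₀, rfl⟩
      ext x
      have : p (K.subtype x) = 0 := x.2
      simp [precompQ, this]
  have hexactF := Module.Flat.rTensor_exact F hexact
  obtain ⟨u, hu⟩ := (phi_free_bijective k A Q F n).2 (g ∘ₗ p)
  have h0 : (precompQ k A Q K.subtype).rTensor F u = 0 := by
    apply phi_injective_of_fg k A Q F
    rw [phi_natural, hu, map_zero]
    ext x
    have : p (K.subtype x) = 0 := x.2
    simp [this]
  obtain ⟨v, hv⟩ := (hexactF u).mp h0
  have hgv : phi k A Q F v = g := by
    ext y
    obtain ⟨m, rfl⟩ := hp y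
    have hnat := DFunLike.congr_fun (phi_natural k A Q F p v) m
    rw [hv, hu] at hnat
    simpa using hnat.symm
  have hres : Function.Surjective (precompQ k A Q (Submodule.subtype I)) := by
    intro f
    obtain ⟨h, hh⟩ := hQ.out (Submodule.subtype I) I.injective_subtype f
    exact ⟨h, LinearMap.ext hh⟩
  obtain ⟨w, hw⟩ := LinearMap.rTensor_surjective F hres v
  refine ⟨phi k A Q F w, fun x hx => ?_⟩
  have hnat := DFunLike.congr_fun (phi_natural k A Q F (Submodule.subtype I) w) ⟨x, hx⟩
  rw [hw, hgv] at hnat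
  simpa using hnat.symm
end

section
/- Let p be a prime number, let k be a commutative ring of characteristic p (i.e. p · 1 = 0 in k), and let σ be a finite set. Regard the polynomial algebra k[X_i : i ∈ σ] as an algebra over itself via the k-algebra endomorphism determined by X_i ↦ X_i^p − X_i for every i ∈ σ (the Artin–Schreier morphism). Then with this algebra structure k[X_i : i ∈ σ] is an étale algebra over k[X_i : i ∈ σ]: it is of finite presentation and formally étale. -/
/-!
STATEMENT 9: over a commutative ring `k` of characteristic `p` (a prime), the
Artin–Schreier morphism of the polynomial algebra `k[Xᵢ : i ∈ σ]` (for `σ` finite),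
determined by `Xᵢ ↦ Xᵢ^p − Xᵢ`, makes `k[Xᵢ : i ∈ σ]` an étale algebra over itself.
-/

open MvPolynomial

/-- The Artin–Schreier endomorphism of the polynomial ring, determined by
`Xᵢ ↦ Xᵢ^p − Xᵢ` for every `i ∈ σ`. -/
noncomputable def artinSchreier (p : ℕ) (k : Type u) [CommRing k] (σ : Type) :
    MvPolynomial σ k →+* MvPolynomial σ k :=
  (aeval (fun i : σ => (X i : MvPolynomial σ k) ^ p - X i)).toRingHom

/-- The algebra structure of the polynomial ring over itself given by the
Artin–Schreier morphism. -/
noncomputable def artinSchreierAlgebra (p : ℕ) (k : Type u) [CommRing k] (σ : Type) :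
    Algebra (MvPolynomial σ k) (MvPolynomial σ k) :=
  (artinSchreier p k σ).toAlgebra



theorem AS.sq_zero_add_pow {B : Type*} [CommRing B] (a d : B) (hd : d * d = 0) (n : ℕ) :
    (a + d) ^ (n + 1) = a ^ (n + 1) + (n + 1) * a ^ n * d := by
  induction n with
  | zero => ring
  | succ n ih =>
    rw [pow_succ (a + d), ih]
    push_cast
    linear_combination ((n : B) + 1) * a ^ n * hd

theorem AS.sq_zero_add_pow_prime {B : Type*} [CommRing B] {p : ℕ} (hp : p.Prime)
    (hpB : (p : B) = 0) (a d : B) (hd : d * d = 0) : (a + d) ^ p = a ^ p := by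
  obtain ⟨n, rfl⟩ : ∃ n, p = n + 1 := ⟨p - 1, (Nat.succ_pred_eq_of_pos hp.pos).symm⟩
  rw [AS.sq_zero_add_pow a d hd n]
  have h : ((n : B) + 1) = ((n + 1 : ℕ) : B) := by push_cast; ring
  rw [h, hpB]; ring

variable {p : ℕ} {k : Type u} [CommRing k] {σ : Type}


theorem artinSchreier_C (a : k) : artinSchreier p k σ (C a) = C a := by
  simp [artinSchreier, algebraMap_eq]

theorem artinSchreier_X (i : σ) : artinSchreier p k σ (X i) = X i ^ p - X i := by
  simp [artinSchreier]

noncomputable def ASphi (p : ℕ) (k : Type u) [CommRing k] (σ : Type) :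
    MvPolynomial σ (MvPolynomial σ k) →+* MvPolynomial σ k :=
  eval₂Hom (artinSchreier p k σ) X

theorem ASphi_C (r : MvPolynomial σ k) : ASphi p k σ (C r) = artinSchreier p k σ r :=
  eval₂Hom_C _ _ _

theorem ASphi_X (i : σ) : ASphi p k σ (X i) = X i := eval₂Hom_X' _ _ _

theorem ASphi_comp_map :
    (ASphi p k σ).comp (MvPolynomial.map (C : k →+* MvPolynomial σ k)) =
      RingHom.id (MvPolynomial σ k) := by
  apply MvPolynomial.ringHom_ext
  · intro a
    simp only [RingHom.comp_apply, map_C, ASphi_C, artinSchreier_C, RingHom.id_apply]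
  · intro i
    simp only [RingHom.comp_apply, map_X, ASphi_X, RingHom.id_apply]

theorem ASphi_surjective : Function.Surjective (ASphi p k σ) := fun r =>
  ⟨MvPolynomial.map (C : k →+* MvPolynomial σ k) r, RingHom.congr_fun ASphi_comp_map r⟩

theorem ASphi_ker :
    RingHom.ker (ASphi p k σ) =
      Ideal.span (Set.range fun i : σ =>
        (C (X i) : MvPolynomial σ (MvPolynomial σ k)) - (X i ^ p - X i)) := by
  set J : Ideal (MvPolynomial σ (MvPolynomial σ k)) := Ideal.span (Set.range fun i : σ =>
        (C (X i) : MvPolynomial σ (MvPolynomial σ k)) - (X i ^ p - X i)) with hJ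
  set ρ : MvPolynomial σ k →+* MvPolynomial σ (MvPolynomial σ k) :=
    eval₂Hom ((C : MvPolynomial σ k →+* MvPolynomial σ (MvPolynomial σ k)).comp
      (C : k →+* MvPolynomial σ k)) (fun i => X i ^ p - X i) with hρdef
  set ψ : MvPolynomial σ (MvPolynomial σ k) →+* MvPolynomial σ (MvPolynomial σ k) :=
    eval₂Hom ρ X with hψdef
  set w : MvPolynomial σ (MvPolynomial σ k) →+* MvPolynomial σ k :=
    eval₂Hom (artinSchreier p k σ) X with hwdef
  have hρ : ρ = (MvPolynomial.map (C : k →+* MvPolynomial σ k)).comp (artinSchreier p k σ) := by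
    apply MvPolynomial.ringHom_ext
    · intro a
      simp only [hρdef, eval₂Hom_C, RingHom.comp_apply, artinSchreier_C, map_C]
    · intro i
      simp only [hρdef, eval₂Hom_X', RingHom.comp_apply, artinSchreier_X, map_sub, map_pow, map_X]
  have hψ : ψ = (MvPolynomial.map (C : k →+* MvPolynomial σ k)).comp w := by
    apply MvPolynomial.ringHom_ext
    · intro r
      simp only [hψdef, eval₂Hom_C, RingHom.comp_apply, hwdef]
      rw [hρ]
      simp only [RingHom.comp_apply]
    · intro i
      simp only [hψdef, eval₂Hom_X', RingHom.comp_apply, hwdef, map_X]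
  have hφρ : (ASphi p k σ).comp ρ = artinSchreier p k σ := by
    apply MvPolynomial.ringHom_ext
    · intro a
      rw [RingHom.comp_apply, hρdef]
      rw [show (eval₂Hom ((C : MvPolynomial σ k →+* MvPolynomial σ (MvPolynomial σ k)).comp
        (C : k →+* MvPolynomial σ k)) (fun i : σ => X i ^ p - X i)) (C a)
          = C (C a) from eval₂Hom_C _ _ _]
      rw [ASphi_C, artinSchreier_C]
    · intro i
      rw [RingHom.comp_apply, hρdef]
      rw [show (eval₂Hom ((C : MvPolynomial σ k →+* MvPolynomial σ (MvPolynomial σ k)).comp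
        (C : k →+* MvPolynomial σ k)) (fun i : σ => X i ^ p - X i)) (X i)
          = X i ^ p - X i from eval₂Hom_X' _ _ _]
      rw [map_sub, map_pow, ASphi_X, artinSchreier_X]
  have hφψ : (ASphi p k σ).comp ψ = ASphi p k σ := by
    apply MvPolynomial.ringHom_ext
    · intro r
      simp only [RingHom.comp_apply, hψdef, eval₂Hom_C, ASphi_C]
      have := RingHom.congr_fun hφρ r
      rw [RingHom.comp_apply] at this
      exact this
    · intro i
      simp only [RingHom.comp_apply, hψdef, eval₂Hom_X', ASphi_X]
  apply le_antisymm
  · -- ker ⊆ J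
    intro f hf
    have hf0 : ASphi p k σ f = 0 := hf
    have hwf : w f = 0 := by
      have h1 : ASphi p k σ (ψ f) = 0 := by
        have := RingHom.congr_fun hφψ f
        rw [RingHom.comp_apply] at this
        rw [this, hf0]
      rw [RingHom.congr_fun hψ f, RingHom.comp_apply] at h1
      have h2 := RingHom.congr_fun (ASphi_comp_map (p := p) (k := k) (σ := σ)) (w f)
      rw [RingHom.comp_apply, RingHom.id_apply] at h2
      rwa [h2] at h1
    have hψf : ψ f = 0 := by
      rw [RingHom.congr_fun hψ f, RingHom.comp_apply, hwf, map_zero]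
    have hq : (Ideal.Quotient.mk J).comp ψ = Ideal.Quotient.mk J := by
      apply MvPolynomial.ringHom_ext
      · intro r
        simp only [RingHom.comp_apply, hψdef, eval₂Hom_C]
        have : (Ideal.Quotient.mk J).comp ρ =
            (Ideal.Quotient.mk J).comp (C : MvPolynomial σ k →+* MvPolynomial σ (MvPolynomial σ k)) := by
          apply MvPolynomial.ringHom_ext
          · intro a
            simp only [RingHom.comp_apply, hρdef, eval₂Hom_C]
          · intro i
            simp only [RingHom.comp_apply, hρdef, eval₂Hom_X']
            rw [Ideal.Quotient.eq]
            have hm : (C (X i) : MvPolynomial σ (MvPolynomial σ k)) - (X i ^ p - X i) ∈ J :=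
              Ideal.subset_span ⟨i, rfl⟩
            have := J.neg_mem hm
            simpa [neg_sub] using this
        have := RingHom.congr_fun this r
        rw [RingHom.comp_apply, RingHom.comp_apply] at this
        exact this
      · intro i
        simp only [RingHom.comp_apply, hψdef, eval₂Hom_X']
    have hqf := RingHom.congr_fun hq f
    rw [RingHom.comp_apply, hψf, map_zero] at hqf
    rw [← Ideal.Quotient.eq_zero_iff_mem]
    exact hqf.symm
  · -- J ⊆ ker
    rw [hJ, Ideal.span_le]
    rintro x ⟨i, rfl⟩
    simp only [SetLike.mem_coe, RingHom.mem_ker, map_sub, map_pow, ASphi_C, ASphi_X,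
      artinSchreier_X]
    ring

theorem AS_finitePresentation (p : ℕ) (k : Type u) [CommRing k] (σ : Type) [Finite σ] :
    @Algebra.FinitePresentation (MvPolynomial σ k) (MvPolynomial σ k) _ _
      (artinSchreierAlgebra p k σ) := by
  let F : @AlgHom (MvPolynomial σ k) (MvPolynomial σ (MvPolynomial σ k)) (MvPolynomial σ k)
      _ _ _ _ (artinSchreierAlgebra p k σ) :=
    @AlgHom.mk (MvPolynomial σ k) (MvPolynomial σ (MvPolynomial σ k)) (MvPolynomial σ k)
      _ _ _ _ (artinSchreierAlgebra p k σ) (ASphi p k σ)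
      (fun r => by rw [MvPolynomial.algebraMap_eq]; exact ASphi_C r)
  have hsurj : Function.Surjective (ASphi p k σ) := ASphi_surjective
  have hker : (RingHom.ker (ASphi p k σ)).FG := by
    rw [ASphi_ker]
    exact Submodule.fg_span (Set.finite_range _)
  exact @Algebra.FinitePresentation.of_surjective (MvPolynomial σ k)
    (MvPolynomial σ (MvPolynomial σ k)) (MvPolynomial σ k) _ _ _ _
    (artinSchreierAlgebra p k σ) F hsurj hker inferInstance

theorem AS_formallyEtale (p : ℕ) (hp : p.Prime) (k : Type u) [CommRing k]
    (hchar : (p : k) = 0) (σ : Type) :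
    @Algebra.FormallyEtale (MvPolynomial σ k) (MvPolynomial σ k) _ _
      (artinSchreierAlgebra p k σ) := by
  letI : Algebra (MvPolynomial σ k) (MvPolynomial σ k) := artinSchreierAlgebra p k σ
  have hC' : ∀ a : k,
      algebraMap (MvPolynomial σ k) (MvPolynomial σ k) (C a) = C a := fun a =>
    artinSchreier_C a
  have hX' : ∀ i : σ, algebraMap (MvPolynomial σ k) (MvPolynomial σ k) (X i)
      = X i ^ p - X i := fun i => artinSchreier_X i
  have hpR : ((p : ℕ) : MvPolynomial σ k) = 0 := by
    rw [← map_natCast (C : k →+* MvPolynomial σ k) p, hchar, map_zero]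
  rw [Algebra.FormallyEtale.iff_comp_bijective]
  intro B _ _ I hI
  have hpB : ((p : ℕ) : B) = 0 := by
    rw [← map_natCast (algebraMap (MvPolynomial σ k) B) p, hpR, map_zero]
  constructor
  · -- injectivity
    intro f g hfg
    have hXeq : ∀ i, f (X i) = g (X i) := by
      intro i
      have hd : f (X i) - g (X i) ∈ I := by
        have h1 := AlgHom.congr_fun hfg (X i)
        simp only [AlgHom.comp_apply, Ideal.Quotient.mkₐ_eq_mk] at h1
        exact Ideal.Quotient.eq.mp h1
      have hdd : (f (X i) - g (X i)) * (f (X i) - g (X i)) = 0 := by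
        have h2 : (f (X i) - g (X i)) * (f (X i) - g (X i)) ∈ I ^ 2 := by
          rw [sq]; exact Ideal.mul_mem_mul hd hd
        rw [hI] at h2
        simpa using h2
      have hf1 := f.commutes (X i)
      have hg1 := g.commutes (X i)
      rw [hX' i] at hf1 hg1
      simp only [map_sub, map_pow] at hf1 hg1
      have heq : f (X i) ^ p - f (X i) = g (X i) ^ p - g (X i) := by rw [hf1, hg1]
      have hsplit : f (X i) = g (X i) + (f (X i) - g (X i)) := by ring
      rw [hsplit, AS.sq_zero_add_pow_prime hp hpB _ _ hdd] at heq
      have h0 : f (X i) - g (X i) = 0 := by linear_combination -heq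
      exact sub_eq_zero.mp h0
    have hCeq : ∀ a : k, f (C a) = g (C a) := by
      intro a
      have h1 := f.commutes (C a)
      have h2 := g.commutes (C a)
      rw [hC' a] at h1 h2
      rw [h1, h2]
    have : (f : MvPolynomial σ k →+* B) = g := MvPolynomial.ringHom_ext hCeq hXeq
    exact AlgHom.ext fun x => RingHom.congr_fun this x
  · -- surjectivity
    intro fbar
    choose cc hcc using fun i : σ => Ideal.Quotient.mk_surjective (I := I) (fbar (X i))
    set ε : σ → B := fun i =>
      cc i ^ p - cc i - algebraMap (MvPolynomial σ k) B (X i) with hεdef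
    have hε : ∀ i, ε i ∈ I := by
      intro i
      rw [← Ideal.Quotient.eq_zero_iff_mem]
      have h1 := fbar.commutes (X i)
      rw [hX' i] at h1
      simp only [map_sub, map_pow] at h1
      show Ideal.Quotient.mk I
        (cc i ^ p - cc i - algebraMap (MvPolynomial σ k) B (X i)) = 0
      rw [map_sub, map_sub, map_pow, hcc, Ideal.Quotient.mk_algebraMap, h1]
      ring
    have hdd : ∀ i, ε i * ε i = 0 := by
      intro i
      have h2 : ε i * ε i ∈ I ^ 2 := by rw [sq]; exact Ideal.mul_mem_mul (hε i) (hε i)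
      rw [hI] at h2
      simpa using h2
    set b : σ → B := fun i => cc i + ε i with hbdef
    have hb : ∀ i, b i ^ p - b i = algebraMap (MvPolynomial σ k) B (X i) := by
      intro i
      show (cc i + ε i) ^ p - (cc i + ε i) = _
      rw [AS.sq_zero_add_pow_prime hp hpB _ _ (hdd i), hεdef]
      ring
    set F0 : MvPolynomial σ k →+* B :=
      eval₂Hom ((algebraMap (MvPolynomial σ k) B).comp (C : k →+* MvPolynomial σ k)) b
      with hF0def
    have hcom : F0.comp (algebraMap (MvPolynomial σ k) (MvPolynomial σ k))
        = algebraMap (MvPolynomial σ k) B := by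
      apply MvPolynomial.ringHom_ext
      · intro a
        rw [RingHom.comp_apply, hC' a, hF0def]
        exact eval₂Hom_C _ _ _
      · intro i
        rw [RingHom.comp_apply, hX' i, map_sub, map_pow, hF0def,
          show (eval₂Hom ((algebraMap (MvPolynomial σ k) B).comp
            (C : k →+* MvPolynomial σ k)) b) (X i) = b i from eval₂Hom_X' _ _ _]
        exact hb i
    refine ⟨{ F0 with commutes' := fun r => RingHom.congr_fun hcom r }, ?_⟩
    have hcomp : ((Ideal.Quotient.mkₐ (MvPolynomial σ k) I).comp
        { F0 with commutes' := fun r => RingHom.congr_fun hcom r }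
          : MvPolynomial σ k →+* B ⧸ I) = (fbar : MvPolynomial σ k →+* B ⧸ I) := by
      apply MvPolynomial.ringHom_ext
      · intro a
        show Ideal.Quotient.mk I (F0 (C a)) = fbar (C a)
        have h1 : fbar (C a) = algebraMap (MvPolynomial σ k) (B ⧸ I) (C a) := by
          conv_lhs => rw [← hC' a]
          exact fbar.commutes (C a)
        rw [show F0 (C a) = algebraMap (MvPolynomial σ k) B (C a) from eval₂Hom_C _ _ _,
          Ideal.Quotient.mk_algebraMap, h1]
      · intro i
        show Ideal.Quotient.mk I (F0 (X i)) = fbar (X i)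
        rw [show F0 (X i) = b i from eval₂Hom_X' _ _ _]
        have hε0 : Ideal.Quotient.mk I (ε i) = 0 := Ideal.Quotient.eq_zero_iff_mem.mpr (hε i)
        show Ideal.Quotient.mk I (cc i + ε i) = fbar (X i)
        rw [map_add, hcc i, hε0, add_zero]
    exact AlgHom.ext fun x => RingHom.congr_fun hcomp x


theorem artinSchreier_etale (p : ℕ) (hp : p.Prime) (k : Type u) [CommRing k]
    (hchar : (p : k) = 0) (σ : Type) [Finite σ] :
    @Algebra.Etale (MvPolynomial σ k) (MvPolynomial σ k) _ _
      (artinSchreierAlgebra p k σ) := by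
  have h1 := AS_finitePresentation p k σ
  have h2 := AS_formallyEtale p hp k hchar σ
  exact @Algebra.Etale.mk (MvPolynomial σ k) (MvPolynomial σ k) _ _
    (artinSchreierAlgebra p k σ) h2 h1
end

section
/- Let D and D′ be triangulated categories, each equipped with a t-structure, with subcategories denoted D^{≤n}, D^{≥n} and D′^{≤n}, D′^{≥n}. Let L : D → D′ and R : D′ → D be triangulated functors with L left adjoint to R. Assume: (i) the unit of adjunction id_D → R ∘ L is an isomorphism; (ii) L is right t-exact, i.e. L sends D^{≤0} into D′^{≤0}; (iii) there exists c ≥ 0 such that R sends D′^{≤n} into D^{≤n+c} for all integers n; (iv) for every bounded object X of D′ (i.e. X ∈ D′^{≤n} ∩ D′^{≥m} for some m ≤ n) the counit L(R(X)) → X is an isomorphism; (v) every object of D′ lies in D′^{≤n} for some integer n; (vi) any object of D′ lying in D′^{≤n} for all integers n is zero. Then R sends no nonzero object of D′ to zero, and L and R are quasi-inverse equivalences of categories. -/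
/-!
STATEMENT 10: an adjoint pair `L ⊣ R` of triangulated functors between triangulated
categories with t-structures, such that the unit is an isomorphism, `L` is right
t-exact, `R` shifts the nonpositive parts by a bounded amount, the counit is an
isomorphism on bounded objects, every object of the target is bounded above, and
only zero objects are in every `D′^{≤n}`, consists of quasi-inverse equivalences;
in particular `R` sends no nonzero object to zero.
-/

open CategoryTheory Category Limits Pretriangulated Triangulated

namespace CategoryTheory.Triangulated.TStructure

variable {C : Type*} [Category C] [HasZeroObject C] [Preadditive C] [HasShift C ℤ]
  [∀ n : ℤ, (shiftFunctor C n).Additive] [Pretriangulated C]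

lemma zero_hom' (t : TStructure C) {X Y : C} (f : X ⟶ Y) (n : ℤ)
    (hX : t.le n X) (hY : t.ge (n + 1) Y) : f = 0 := by
  have h1 : t.le 0 (X⟦n⟧) := t.le_shift n n 0 (add_zero n) X hX
  have h2 : t.ge 1 (Y⟦n⟧) := t.ge_shift (n + 1) n 1 rfl Y hY
  have := t.zero' ((shiftFunctor C n).map f) h1 h2
  exact (shiftFunctor C n).map_injective (by rw [this, Functor.map_zero])

lemma le_ext₂ (t : TStructure C) (T : Triangle C) (hT : T ∈ distTriang C) (n : ℤ)
    (h1 : t.le n T.obj₁) (h3 : t.le n T.obj₃) : t.le n T.obj₂ := by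
  obtain ⟨X, Y, hX, hY, f, g, h, mem⟩ := t.exists_triangle T.obj₂ n (n + 1) rfl
  have hg : g = 0 := by
    obtain ⟨k, hk⟩ := Triangle.yoneda_exact₂ T hT g (t.zero_hom' _ n h1 hY)
    rw [hk, t.zero_hom' k n h3 hY, comp_zero]
  have hzY : IsZero Y := by
    obtain ⟨q, hq⟩ := Triangle.yoneda_exact₃ _ mem (𝟙 Y)
      (by change g ≫ 𝟙 Y = 0; rw [hg, zero_comp])
    have hq0 : q = 0 :=
      t.zero_hom' q n (t.le_monotone (by omega) _
        (t.le_shift n 1 (n - 1) (by omega) X hX)) hY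
    rw [IsZero.iff_id_eq_zero, hq, hq0, comp_zero]; rfl
  have : IsIso f := (Triangle.isZero₃_iff_isIso₁ _ mem).1 hzY
  exact ((t.le n).prop_iff_of_iso (asIso f)).1 hX

end CategoryTheory.Triangulated.TStructure

theorem adjunction_isEquivalence_of_tStructures
    {C : Type u₁} [Category.{v₁} C] [HasZeroObject C] [Preadditive C] [HasShift C ℤ]
    [∀ n : ℤ, (shiftFunctor C n).Additive] [Pretriangulated C] [IsTriangulated C]
    {D : Type u₂} [Category.{v₂} D] [HasZeroObject D] [Preadditive D] [HasShift D ℤ]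
    [∀ n : ℤ, (shiftFunctor D n).Additive] [Pretriangulated D] [IsTriangulated D]
    (tC : TStructure C) (tD : TStructure D)
    (L : C ⥤ D) (R : D ⥤ C) [L.CommShift ℤ] [L.IsTriangulated]
    [R.CommShift ℤ] [R.IsTriangulated]
    (adj : L ⊣ R)
    (hunit : IsIso adj.unit)
    (hL_right_exact : ∀ X : C, tC.le 0 X → tD.le 0 (L.obj X))
    (hR_bounded_amplitude : ∃ c : ℤ, 0 ≤ c ∧ ∀ (n : ℤ) (Y : D), tD.le n Y →
      tC.le (n + c) (R.obj Y))
    (hcounit_bounded : ∀ Y : D, (∃ m n : ℤ, m ≤ n ∧ tD.ge m Y ∧ tD.le n Y) →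
      IsIso (adj.counit.app Y))
    (hbounded_above : ∀ Y : D, ∃ n : ℤ, tD.le n Y)
    (hnondegenerate : ∀ Y : D, (∀ n : ℤ, tD.le n Y) → IsZero Y) :
    (∀ Y : D, IsZero (R.obj Y) → IsZero Y) ∧ IsIso adj.unit ∧ IsIso adj.counit := by
  obtain ⟨c, hc0, hR⟩ := hR_bounded_amplitude
  haveI := hunit
  -- `L` is right t-exact in every degree
  have hL : ∀ (n : ℤ) (X : C), tC.le n X → tD.le n (L.obj X) := by
    intro n X hX
    have h2 : tD.le 0 (L.obj (X⟦n⟧)) :=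
      hL_right_exact _ (tC.le_shift n n 0 (add_zero n) X hX)
    have h3 : tD.le 0 ((L.obj X)⟦n⟧) :=
      ((tD.le 0).prop_iff_of_iso ((L.commShiftIso n).app X)).1 h2
    rw [← tD.shift_le n 0 n (add_zero n)]
    exact h3
  -- key: `R Z` zero implies `Z` zero
  have key : ∀ Z : D, IsZero (R.obj Z) → IsZero Z := by
    intro Z hZ
    have step : ∀ n : ℤ, tD.le n Z → tD.le (n - 1) Z := by
      intro n hn
      obtain ⟨X, Y, hX, hY, f, g, h, mem⟩ := tD.exists_triangle Z (n - c - 2) (n - c - 1)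
        (by omega)
      have hY_le : tD.le n Y := by
        apply tD.le_ext₂ _ (rot_of_distTriang _ mem) n
        · exact hn
        · exact tD.le_monotone (by omega) _ (tD.le_shift (n - c - 2) 1 (n - c - 3) (by omega) X hX)
      haveI hYc : IsIso (adj.counit.app Y) :=
        hcounit_bounded Y ⟨n - c - 1, n, by omega, hY, hY_le⟩
      have memR := R.map_distinguished _ mem
      haveI hmor : IsIso ((R.mapTriangle.obj (Triangle.mk f g h)).mor₃) :=
        (Triangle.isZero₂_iff_isIso₃ _ memR).1 hZ
      have hRX : tC.le (n - 2) (R.obj X) :=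
        tC.le_monotone (by omega) _ (hR (n - c - 2) X hX)
      have hRX1 : tC.le (n - 3) ((R.obj X)⟦(1 : ℤ)⟧) :=
        tC.le_shift (n - 2) 1 (n - 3) (by omega) _ hRX
      have hRY : tC.le (n - 3) (R.obj Y) :=
        ((tC.le (n - 3)).prop_iff_of_iso
          (asIso ((R.mapTriangle.obj (Triangle.mk f g h)).mor₃))).2 hRX1
      have hY3 : tD.le (n - 3) Y :=
        ((tD.le (n - 3)).prop_iff_of_iso (asIso (adj.counit.app Y))).1 (hL _ _ hRY)
      exact tD.le_ext₂ _ mem (n - 1) (tD.le_monotone (by omega) _ hX)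
        (tD.le_monotone (by omega) _ hY3)
    apply hnondegenerate
    obtain ⟨N, hN⟩ := hbounded_above Z
    have desc : ∀ k : ℕ, tD.le (N - k) Z := by
      intro k
      induction k with
      | zero => simpa using hN
      | succ k ih => exact tD.le_monotone (by push_cast; omega) _ (step _ ih)
    intro n
    by_cases hnN : N ≤ n
    · exact tD.le_monotone hnN _ hN
    · exact tD.le_monotone (by omega) _ (desc (N - n).toNat)
  -- the counit is an isomorphism
  have hcounit : ∀ Y : D, IsIso (adj.counit.app Y) := by
    intro Y
    obtain ⟨Z, g, h, mem⟩ := distinguished_cocone_triangle (adj.counit.app Y)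
    have h1 : IsIso (adj.unit.app (R.obj Y) ≫ R.map (adj.counit.app Y)) := by
      rw [adj.right_triangle_components]
      exact IsIso.id _
    haveI h2 : IsIso (R.map (adj.counit.app Y)) := by haveI := h1; exact IsIso.of_isIso_comp_left (adj.unit.app (R.obj Y)) (R.map (adj.counit.app Y))
    have h3 : IsZero (R.obj Z) :=
      Triangle.isZero₃_of_isIso₁ _ (R.map_distinguished _ mem) h2
    exact (Triangle.isZero₃_iff_isIso₁ _ mem).1 (key Z h3)
  exact ⟨key, hunit, NatIso.isIso_of_isIso_app adj.counit⟩
end
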